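/- Define ψ : ℕ × ℕ → M_2(𝕋) by ψ(i,j) = [[i − j, i + j],[−∞, j − i]] (entries are real numbers, viewed in 𝕋). Then ψ is injective, and for all (i,j), (h,k) ∈ ℕ × ℕ the tropical matrix product satisfies ψ(i,j)·ψ(h,k) = ψ(i+h−j, k) if j ≤ h, and ψ(i,j)·ψ(h,k) = ψ(i, j−h+k) if j > h. In particular ψ is an injective homomorphism from the monoid (ℕ × ℕ, ∗), where (i,j) ∗ (h,k) = (i+h−j, k) if j ≤ h and (i, j−h+k) if j > h, onto a submonoid of M_2(𝕋) with identity element E = ψ(0,0) = [[0,0],[−∞,0]]. -/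

import Mathlib

/-- The tropical semiring `𝕋 = ℝ ∪ {−∞}` (addition = max, multiplication = +,
with `⊥ = −∞` absorbing for `+`). -/
abbrev Trop : Type := WithBot ℝ

/-- Tropical product of 2×2 matrices: `(A⊙B)_{ik} = max_j (a_{ij} + b_{jk})`. -/
noncomputable def tmul (A B : Matrix (Fin 2) (Fin 2) Trop) : Matrix (Fin 2) (Fin 2) Trop :=
  Matrix.of fun i k => max (A i 0 + B 0 k) (A i 1 + B 1 k)

/-- `ψ(i,j) = [[i − j, i + j],[−∞, j − i]] ∈ M₂(𝕋)` (real entries, viewed in `𝕋`). -/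
noncomputable def psi (p : ℕ × ℕ) : Matrix (Fin 2) (Fin 2) Trop :=
  !![(((p.1 : ℝ) - (p.2 : ℝ) : ℝ) : Trop), (((p.1 : ℝ) + (p.2 : ℝ) : ℝ) : Trop);
     (⊥ : Trop), (((p.2 : ℝ) - (p.1 : ℝ) : ℝ) : Trop)]

/-- `ψ` is injective and transforms the bicyclic operation
`(i,j) ∗ (h,k) = (i+h−j, k)` if `j ≤ h`, `(i, j−h+k)` if `j > h`, into the tropical
matrix product; its image is a submonoid of `M₂(𝕋)` with identity
`E = ψ(0,0) = [[0,0],[−∞,0]]`. -/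
theorem stmt17 :
    Function.Injective psi ∧
    (∀ i j h k : ℕ, j ≤ h → tmul (psi (i, j)) (psi (h, k)) = psi (i + h - j, k)) ∧
    (∀ i j h k : ℕ, h < j → tmul (psi (i, j)) (psi (h, k)) = psi (i, j - h + k)) ∧
    psi (0, 0) = !![(0 : Trop), (0 : Trop); (⊥ : Trop), (0 : Trop)] := by
  refine ⟨?_, ?_, ?_, ?_⟩
  · intro ⟨a, b⟩ ⟨c, d⟩ hpq
    have h1 := congrFun (congrFun hpq 0) 0
    have h2 := congrFun (congrFun hpq 0) 1
    simp [psi] at h1 h2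
    have e1 : (a : ℝ) - b = c - d := by exact_mod_cast h1
    have e2 : (a : ℝ) + b = c + d := by exact_mod_cast h2
    have ha : (a : ℝ) = c := by linarith
    have hb : (b : ℝ) = d := by linarith
    simp only [Prod.mk.injEq]
    exact ⟨by exact_mod_cast ha, by exact_mod_cast hb⟩
  · intro i j h k hjh
    have hjh' : (j : ℝ) ≤ h := by exact_mod_cast hjh
    have hle : j ≤ i + h := by omega
    have hcast : ((i + h - j : ℕ) : ℝ) = i + h - j := by push_cast [hle]; ring
    ext a b
    fin_cases a <;> fin_cases b <;>
        simp [tmul, psi, hcast, ← WithBot.coe_add]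
    · ring
    · have hb : ((i : ℝ) + j + (k - h)) ≤ (i : ℝ) - j + (h + k) := by linarith
      rw [← WithBot.coe_max, sup_eq_left.mpr hb, WithBot.coe_inj]; ring
    · ring
  · intro i j h k hhj
    have hhj' : (h : ℝ) < j := by exact_mod_cast hhj
    have hcast : ((j - h + k : ℕ) : ℝ) = j - h + k := by push_cast [hhj.le]; ring
    ext a b
    fin_cases a <;> fin_cases b <;>
        simp [tmul, psi, hcast, ← WithBot.coe_add]
    · ring
    · have hb : ((i : ℝ) - j + (h + k)) ≤ (i : ℝ) + j + (k - h) := by linarith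
      rw [← WithBot.coe_max, sup_eq_right.mpr hb, WithBot.coe_inj]; ring
    · ring
  · norm_num [psi]
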